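/- Fix d ≥ 1. The set of T_d-strings is exactly the smallest set of strings containing the base string ([4] if d = 1, and [3,2,…,2,3] with d − 2 twos if d ≥ 2) and closed under the two operations [b₁,…,b_r] ↦ [b₁+1, b₂,…,b_r, 2] and [b₁,…,b_r] ↦ [2, b₁,…,b_r + 1] (where in the last operation the final entry is increased by 1 and a 2 is prepended). -/

import Mathlib

/-- The value of the Hirzebruch–Jung continued fraction
`[b₁,…,b_r] = b₁ − 1/(b₂ − 1/(⋯ − 1/b_r))`.
(For the empty list we set the value to `0`; since `1/0 = 0` in `ℚ`, the
recursion then gives the correct value `b_r` for singleton lists.) -/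
def hjValue : List ℤ → ℚ
  | [] => 0
  | b :: l => (b : ℚ) - 1 / hjValue l

/-- A string is a nonempty list of integers, each at least `2`. -/
def IsString (l : List ℤ) : Prop := l ≠ [] ∧ ∀ b ∈ l, 2 ≤ b

/-- Two strings are conjugate if their Hirzebruch–Jung continued fraction
values are `n/a` and `n/(n−a)` for some integers `0 < a < n` with
`gcd(a,n) = 1`. -/
def Conjugate (l l' : List ℤ) : Prop :=
  ∃ n a : ℤ, 0 < a ∧ a < n ∧ IsCoprime a n ∧
    hjValue l = (n : ℚ) / (a : ℚ) ∧ hjValue l' = (n : ℚ) / ((n : ℚ) - (a : ℚ))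

/-- A `T_d`-string: a string whose value is `dn²/(dna − 1)` for some `n ≥ 2`
and `1 ≤ a < n` with `gcd(a,n) = 1` (the string of the minimal resolution of
a `T_d`-singularity `(1/dn²)(1, dna − 1)`). -/
def IsTString (d : ℕ) (l : List ℤ) : Prop :=
  IsString l ∧ ∃ n a : ℤ, 2 ≤ n ∧ 1 ≤ a ∧ a < n ∧ IsCoprime a n ∧
    hjValue l = (((d : ℤ) * n ^ 2 : ℤ) : ℚ) / (((d : ℤ) * n * a - 1 : ℤ) : ℚ)

/-- The base `T_d`-string: `[4]` for `d = 1`, and `[3,2,…,2,3]` with `d − 2`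
twos for `d ≥ 2`. -/
def baseTString (d : ℕ) : List ℤ :=
  if d = 1 then [4] else 3 :: (List.replicate (d - 2) 2 ++ [3])

namespace HJaux

lemma hjValue_cons (b : ℤ) (l : List ℤ) : hjValue (b :: l) = (b:ℚ) - 1 / hjValue l := by
  rw [hjValue]

/-- first column (p,q) of the HJ matrix -/
def PQ : List ℤ → ℤ × ℤ
  | [] => (1, 0)
  | b :: t => (b * (PQ t).1 - (PQ t).2, (PQ t).1)

/-- second column (x,y) of the HJ matrix -/
def XY : List ℤ → ℤ × ℤ
  | [] => (0, 1)
  | b :: t => (b * (XY t).1 - (XY t).2, (XY t).1)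

lemma PQ_nil_fst : (PQ []).1 = 1 := rfl
lemma PQ_nil_snd : (PQ []).2 = 0 := rfl
lemma XY_nil_fst : (XY []).1 = 0 := rfl
lemma XY_nil_snd : (XY []).2 = 1 := rfl
lemma PQ_cons_fst (b t) : (PQ (b :: t)).1 = b * (PQ t).1 - (PQ t).2 := rfl
lemma PQ_cons_snd (b t) : (PQ (b :: t)).2 = (PQ t).1 := rfl
lemma XY_cons_fst (b t) : (XY (b :: t)).1 = b * (XY t).1 - (XY t).2 := rfl
lemma XY_cons_snd (b t) : (XY (b :: t)).2 = (XY t).1 := rfl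

lemma append_single (l : List ℤ) (c : ℤ) :
    (PQ (l ++ [c])).1 = c * (PQ l).1 + (XY l).1 ∧
    (PQ (l ++ [c])).2 = c * (PQ l).2 + (XY l).2 ∧
    (XY (l ++ [c])).1 = -(PQ l).1 ∧
    (XY (l ++ [c])).2 = -(PQ l).2 := by
  induction l with
  | nil =>
    refine ⟨?_, ?_, ?_, ?_⟩ <;>
      simp [PQ_cons_fst, PQ_cons_snd, XY_cons_fst, XY_cons_snd,
        PQ_nil_fst, PQ_nil_snd, XY_nil_fst, XY_nil_snd]
  | cons b t ih =>
    obtain ⟨h1, h2, h3, h4⟩ := ih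
    simp only [List.cons_append, PQ_cons_fst, PQ_cons_snd, XY_cons_fst, XY_cons_snd,
      h1, h2, h3, h4]
    refine ⟨by ring, trivial, by ring, trivial⟩

lemma reverse_eq (l : List ℤ) :
    (PQ l.reverse).1 = (PQ l).1 ∧ (PQ l.reverse).2 = -(XY l).1 ∧
    (XY l.reverse).1 = -(PQ l).2 ∧ (XY l.reverse).2 = (XY l).2 := by
  induction l with
  | nil =>
    refine ⟨?_, ?_, ?_, ?_⟩ <;>
      simp [PQ_nil_fst, PQ_nil_snd, XY_nil_fst, XY_nil_snd]
  | cons b t ih =>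
    obtain ⟨h1, h2, h3, h4⟩ := ih
    rw [List.reverse_cons]
    obtain ⟨a1, a2, a3, a4⟩ := append_single t.reverse b
    simp only [a1, a2, a3, a4, h1, h2, h3, h4, PQ_cons_fst, PQ_cons_snd,
      XY_cons_fst, XY_cons_snd]
    refine ⟨by ring, by ring, trivial, by ring⟩

lemma det (l : List ℤ) : (PQ l).1 * (XY l).2 - (XY l).1 * (PQ l).2 = 1 := by
  induction l with
  | nil => simp [PQ_nil_fst, PQ_nil_snd, XY_nil_fst, XY_nil_snd]
  | cons b t ih =>
    simp only [PQ_cons_fst, PQ_cons_snd, XY_cons_fst, XY_cons_snd]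
    linear_combination ih

lemma pq_pos : ∀ {l : List ℤ}, (∀ b ∈ l, 2 ≤ b) →
    0 ≤ (PQ l).2 ∧ (PQ l).2 + 1 ≤ (PQ l).1 := by
  intro l
  induction l with
  | nil => intro _; simp [PQ_nil_fst, PQ_nil_snd]
  | cons b t ih =>
    intro h
    have hb : 2 ≤ b := h b (by simp)
    obtain ⟨i1, i2⟩ := ih (fun c hc => h c (by simp [hc]))
    have hp0 : (0:ℤ) ≤ (PQ t).1 := by linarith
    have m1 := mul_le_mul_of_nonneg_right hb hp0
    simp only [PQ_cons_fst b t, PQ_cons_snd b t]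
    exact ⟨by linarith, by nlinarith [m1]⟩

lemma value_eq : ∀ {l : List ℤ}, (∀ b ∈ l, 2 ≤ b) →
    hjValue l = ((PQ l).1 : ℚ) / ((PQ l).2 : ℚ) := by
  intro l
  induction l with
  | nil => intro _; simp [hjValue, PQ_nil_fst, PQ_nil_snd]
  | cons b t ih =>
    intro h
    have ih' := ih (fun c hc => h c (by simp [hc]))
    have hp := pq_pos (l := t) (fun c hc => h c (by simp [hc]))
    have hp1 : (0 : ℤ) < (PQ t).1 := by linarith [hp.1, hp.2]
    have hp0 : ((PQ t).1 : ℚ) ≠ 0 := Int.cast_ne_zero.mpr (ne_of_gt hp1)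
    rw [hjValue_cons, ih', one_div, inv_div]
    simp only [PQ_cons_fst b t, PQ_cons_snd b t]
    push_cast
    field_simp

/-- invariants of the continuants of a string -/
lemma inv : ∀ {l : List ℤ}, IsString l →
    1 ≤ (PQ l).2 ∧ (PQ l).2 + 1 ≤ (PQ l).1 ∧ (XY l).2 ≤ 0 ∧ (XY l).1 + 1 ≤ (XY l).2 ∧
      1 ≤ (PQ l).2 + (XY l).2 ∧ (PQ l).2 + (XY l).2 ≤ (PQ l).1 + (XY l).1 := by
  intro l
  induction l with
  | nil => intro h; exact absurd rfl h.1
  | cons b t ih =>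
    intro h
    have hb : 2 ≤ b := h.2 b (by simp)
    cases t with
    | nil =>
      simp only [PQ_cons_fst, PQ_cons_snd, XY_cons_fst, XY_cons_snd,
        PQ_nil_fst, PQ_nil_snd, XY_nil_fst, XY_nil_snd]
      omega
    | cons c t' =>
      obtain ⟨i1, i2, i3, i4, i5, i6⟩ :=
        ih ⟨by simp, fun z hz => h.2 z (by simp at hz ⊢; tauto)⟩
      have hx0 : (XY (c :: t')).1 ≤ 0 := by linarith
      have hpx0 : (0:ℤ) ≤ (PQ (c :: t')).1 + (XY (c :: t')).1 := by linarith
      have hp0 : (0:ℤ) ≤ (PQ (c :: t')).1 := by linarith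
      have m1 := mul_le_mul_of_nonneg_right hb hp0
      have m2 := mul_le_mul_of_nonpos_right hb hx0
      have m3 := mul_le_mul_of_nonneg_right hb hpx0
      simp only [PQ_cons_fst b (c :: t'), PQ_cons_snd b (c :: t'),
        XY_cons_fst b (c :: t'), XY_cons_snd b (c :: t')]
      refine ⟨by linarith, by nlinarith [m1], by linarith, by nlinarith [m2],
        by linarith, by nlinarith [m3]⟩

end HJaux

namespace HJaux

/-- workhorse: the continuants of a T-string are completely determined. -/
lemma main_cont {D n a : ℤ} (hD : 1 ≤ D) (hn : 2 ≤ n) (ha1 : 1 ≤ a) (han : a < n)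
    (hcop : IsCoprime a n) {l : List ℤ} (hl : IsString l)
    (hval : hjValue l = ((D * n ^ 2 : ℤ) : ℚ) / ((D * n * a - 1 : ℤ) : ℚ)) :
    (PQ l).1 = D * n ^ 2 ∧ (PQ l).2 = D * n * a - 1 ∧
      (XY l).1 = -(D * n * (n - a) - 1) ∧ (XY l).2 = -(D * a * (n - a) - 1) := by
  obtain ⟨i1, i2, i3, i4, i5, i6⟩ := inv hl
  set p := (PQ l).1 with hp
  set q := (PQ l).2 with hq
  set x := (XY l).1 with hx
  set y := (XY l).2 with hy
  have hdet : p * y - x * q = 1 := det l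
  have hDa : 1 ≤ D * a := by nlinarith
  have hDna : 2 ≤ D * n * a := by
    nlinarith [mul_le_mul hn hDa (by linarith : (0:ℤ) ≤ 1) (by linarith : (0:ℤ) ≤ n)]
  have hDnna : 1 ≤ D * n * (n - a) := by
    nlinarith [mul_pos (mul_pos (show (0:ℤ) < D by linarith)
      (show (0:ℤ) < n by linarith)) (show (0:ℤ) < n - a by linarith)]
  have hDana : 1 ≤ D * a * (n - a) := by
    nlinarith [mul_pos (mul_pos (show (0:ℤ) < D by linarith)
      (show (0:ℤ) < a by linarith)) (show (0:ℤ) < n - a by linarith)]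
  have hNpos : 1 ≤ D * n ^ 2 := by
    nlinarith [mul_pos (show (0:ℤ) < D by linarith) (mul_pos
      (show (0:ℤ) < n by linarith) (show (0:ℤ) < n by linarith))]
  set N := D * n ^ 2 with hN
  set A := D * n * a - 1 with hA
  have hApos : 1 ≤ A := by rw [hA]; linarith
  have hveq : hjValue l = (p : ℚ) / (q : ℚ) := value_eq hl.2
  have hq0 : (q : ℚ) ≠ 0 := Int.cast_ne_zero.mpr (ne_of_gt (by linarith))
  have hA0 : ((A : ℤ) : ℚ) ≠ 0 := Int.cast_ne_zero.mpr (ne_of_gt (by linarith))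
  rw [hveq, div_eq_div_iff hq0 hA0] at hval
  have hcross : p * A = N * q := by exact_mod_cast hval
  have hcpq : IsCoprime p q := ⟨y, -x, by linarith [hdet]⟩
  have hcNA : IsCoprime N A := by
    refine ⟨-(D * a * (n - a) - 1), D * n * (n - a) - 1, ?_⟩
    rw [hN, hA]; ring
  have hNdvd : N ∣ p := hcNA.dvd_of_dvd_mul_right ⟨q, hcross⟩
  have hpdvd : p ∣ N := hcpq.dvd_of_dvd_mul_right ⟨A, by linarith [hcross]⟩
  have hpN : p = N := Int.dvd_antisymm (by linarith) (by linarith) hpdvd hNdvd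
  have hqA : q = A := by
    have h2 : p * A = p * q := by rw [hcross, hpN]
    exact (mul_left_cancel₀ (by linarith : p ≠ 0) h2).symm
  set u' := D * n * (n - a) - 1 with hu'
  set v' := D * a * (n - a) - 1 with hv'
  have key : u' * q - p * v' = 1 := by rw [hu', hv', hpN, hqA, hN, hA]; ring
  have key2 : (-x) * q - p * (-y) = 1 := by linarith [hdet]
  have hdvd : p ∣ (-x - u') := by
    refine hcpq.dvd_of_dvd_mul_right (⟨-y - v', ?_⟩ : p ∣ (-x - u') * q)
    linear_combination key2 - key
  have hub1 : 1 ≤ -x := by linarith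
  have hub2 : -x ≤ p - 1 := by linarith
  have hub3 : 0 ≤ u' := by rw [hu']; linarith
  have hub4 : u' ≤ p - 1 := by
    have h3 : p - u' = D * n * a + 1 := by rw [hpN, hN, hu']; ring
    linarith
  have hxu : -x = u' := by
    by_contra hne
    have h0 : -x - u' ≠ 0 := fun hc => hne (by linarith)
    have hle : p ≤ |(-x - u')| := Int.le_of_dvd (abs_pos.mpr h0) ((dvd_abs _ _).mpr hdvd)
    have habs : |(-x - u')| < p := abs_lt.mpr ⟨by linarith, by linarith⟩
    linarith
  have hyv : -y = v' := by
    have h4 : p * (-y) = p * v' := by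
      rw [hxu] at key2; linarith [key, key2]
    exact mul_left_cancel₀ (by linarith : p ≠ 0) h4
  exact ⟨hpN, hqA, by linarith [hxu], by linarith [hyv]⟩

end HJaux

namespace HJaux

lemma isString_reverse {l : List ℤ} (h : IsString l) : IsString l.reverse :=
  ⟨by simpa using h.1, fun b hb => h.2 b (List.mem_reverse.mp hb)⟩

/-- value of the first operation -/
lemma op1_val {D n a : ℤ} (hD : 1 ≤ D) (hn : 2 ≤ n) (ha1 : 1 ≤ a) (han : a < n)
    (hcop : IsCoprime a n) {b : ℤ} {bs : List ℤ} (hl : IsString (b :: bs))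
    (hval : hjValue (b :: bs) = ((D * n ^ 2 : ℤ) : ℚ) / ((D * n * a - 1 : ℤ) : ℚ)) :
    hjValue ((b + 1) :: (bs ++ [2])) =
      ((D * (n + a) ^ 2 : ℤ) : ℚ) / ((D * (n + a) * a - 1 : ℤ) : ℚ) := by
  obtain ⟨e1, e2, e3, e4⟩ := main_cont hD hn ha1 han hcop hl hval
  have hstr2 : ∀ z ∈ (b :: bs) ++ [2], 2 ≤ z := by
    intro z hz
    rcases List.mem_append.mp hz with h | h
    · exact hl.2 z h
    · simp at h; omega
  obtain ⟨a1, a2, _, _⟩ := append_single (b :: bs) 2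
  have hv2 : hjValue ((b :: bs) ++ [2]) =
      (((PQ ((b :: bs) ++ [2])).1 : ℤ) : ℚ) / (((PQ ((b :: bs) ++ [2])).2 : ℤ) : ℚ) :=
    value_eq hstr2
  rw [a1, a2, e1, e2, e3, e4,
    show 2 * (D * n ^ 2) + -(D * n * (n - a) - 1) = D * n * (n + a) + 1 by ring,
    show 2 * (D * n * a - 1) + -(D * a * (n - a) - 1) = D * a * (n + a) - 1 by ring] at hv2
  have hcons : (b :: bs) ++ [2] = b :: (bs ++ [2]) := rfl
  rw [hcons] at hv2
  have hh : hjValue ((b + 1) :: (bs ++ [2])) = 1 + hjValue (b :: (bs ++ [2])) := by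
    rw [hjValue_cons, hjValue_cons]; push_cast; ring
  rw [hh, hv2]
  have hdp : 2 ≤ D * a * (n + a) := by
    have hDa : 1 ≤ D * a := by nlinarith
    nlinarith [mul_le_mul (show (2:ℤ) ≤ n + a by linarith) hDa
      (by linarith : (0:ℤ) ≤ 1) (by linarith : (0:ℤ) ≤ n + a)]
  have h1 : ((D * a * (n + a) - 1 : ℤ) : ℚ) ≠ 0 :=
    Int.cast_ne_zero.mpr (ne_of_gt (by linarith))
  have h2 : ((D * (n + a) * a - 1 : ℤ) : ℚ) ≠ 0 := by
    rw [show D * (n + a) * a - 1 = D * a * (n + a) - 1 by ring]; exact h1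
  rw [eq_div_iff h2]
  have h1' := h1
  push_cast at h1' ⊢
  field_simp [h1']
  ring

/-- value of reversal -/
lemma rev_val {D n a : ℤ} (hD : 1 ≤ D) (hn : 2 ≤ n) (ha1 : 1 ≤ a) (han : a < n)
    (hcop : IsCoprime a n) {l : List ℤ} (hl : IsString l)
    (hval : hjValue l = ((D * n ^ 2 : ℤ) : ℚ) / ((D * n * a - 1 : ℤ) : ℚ)) :
    hjValue l.reverse = ((D * n ^ 2 : ℤ) : ℚ) / ((D * n * (n - a) - 1 : ℤ) : ℚ) := by
  obtain ⟨e1, e2, e3, e4⟩ := main_cont hD hn ha1 han hcop hl hval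
  have hrs := isString_reverse hl
  obtain ⟨r1, r2, _, _⟩ := reverse_eq l
  rw [value_eq hrs.2, r1, r2, e1, e3, neg_neg]

/-- value of the second operation -/
lemma op2_val {D n a : ℤ} (hD : 1 ≤ D) (hn : 2 ≤ n) (ha1 : 1 ≤ a) (han : a < n)
    (hcop : IsCoprime a n) {c : ℤ} {bs : List ℤ} (hl : IsString (bs ++ [c]))
    (hval : hjValue (bs ++ [c]) = ((D * n ^ 2 : ℤ) : ℚ) / ((D * n * a - 1 : ℤ) : ℚ)) :
    hjValue (2 :: (bs ++ [c + 1])) =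
      ((D * (2 * n - a) ^ 2 : ℤ) : ℚ) / ((D * (2 * n - a) * n - 1 : ℤ) : ℚ) := by
  have hc2 : 2 ≤ c := hl.2 c (by simp)
  have hrevstr : IsString (c :: bs.reverse) := by
    have h := isString_reverse hl
    rwa [List.reverse_append, List.reverse_singleton, List.singleton_append] at h
  have hco1 : IsCoprime (n - a) n := by
    have h := (hcop.neg_left).add_mul_right_left 1
    rwa [show -a + 1 * n = n - a by ring] at h
  have hrv : hjValue (c :: bs.reverse) =
      ((D * n ^ 2 : ℤ) : ℚ) / ((D * n * (n - a) - 1 : ℤ) : ℚ) := by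
    have h := rev_val hD hn ha1 han hcop hl hval
    rwa [List.reverse_append, List.reverse_singleton, List.singleton_append] at h
  have hop1v := op1_val hD hn (by omega) (by omega) hco1 hrevstr hrv
  rw [show n + (n - a) = 2 * n - a by ring] at hop1v
  have hstr1 : IsString ((c + 1) :: (bs.reverse ++ [2])) := by
    refine ⟨by simp, ?_⟩
    intro z hz
    simp at hz
    rcases hz with rfl | hz | rfl
    · omega
    · exact hl.2 z (by simp [hz])
    · omega
  have hco2 : IsCoprime (n - a) (2 * n - a) := by
    have h := hco1.add_mul_left_right 1
    rwa [show n + (n - a) * 1 = 2 * n - a by ring] at h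
  have hfin := rev_val hD (by omega : (2:ℤ) ≤ 2 * n - a) (by omega : (1:ℤ) ≤ n - a)
      (by omega : n - a < 2 * n - a) hco2 hstr1 hop1v
  rw [show 2 * n - a - (n - a) = n by ring] at hfin
  rwa [show ((c + 1) :: (bs.reverse ++ [2])).reverse = 2 :: (bs ++ [c + 1]) by
    simp] at hfin

lemma one_lt_value : ∀ {l : List ℤ}, IsString l → 1 < hjValue l := by
  intro l
  induction l with
  | nil => intro h; exact absurd rfl h.1
  | cons b t ih =>
    intro h
    have hb : 2 ≤ b := h.2 b (by simp)
    have hb' : (2 : ℚ) ≤ (b : ℚ) := by exact_mod_cast hb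
    cases t with
    | nil => simp [hjValue]; linarith
    | cons c t' =>
      have hv := ih ⟨by simp, fun z hz => h.2 z (by simp at hz ⊢; tauto)⟩
      have h0 : (0 : ℚ) < hjValue (c :: t') := by linarith
      have h1 : 1 / hjValue (c :: t') < 1 := by
        rw [div_lt_one h0]; linarith
      have h2 : 0 < 1 / hjValue (c :: t') := by positivity
      rw [hjValue_cons]
      linarith

lemma value_cases {b : ℤ} {t : List ℤ} (h : IsString (b :: t)) :
    (t = [] ∧ hjValue (b :: t) = (b : ℚ)) ∨
      (t ≠ [] ∧ (b : ℚ) - 1 < hjValue (b :: t) ∧ hjValue (b :: t) < (b : ℚ)) := by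
  cases t with
  | nil => left; exact ⟨rfl, by simp [hjValue]⟩
  | cons c t' =>
    right
    have hv := one_lt_value (l := c :: t') ⟨by simp, fun z hz => h.2 z (by simp at hz ⊢; tauto)⟩
    have h0 : (0 : ℚ) < hjValue (c :: t') := by linarith
    have h1 : 1 / hjValue (c :: t') < 1 := by rw [div_lt_one h0]; linarith
    have h2 : 0 < 1 / hjValue (c :: t') := by positivity
    refine ⟨by simp, ?_, ?_⟩ <;> rw [hjValue_cons] <;> linarith

/-- uniqueness of string expansions -/
lemma string_unique : ∀ {l l' : List ℤ}, IsString l → IsString l' →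
    hjValue l = hjValue l' → l = l' := by
  intro l
  induction l with
  | nil => intro l' h; exact absurd rfl h.1
  | cons b t ih =>
    intro l' h h' heq
    obtain ⟨b', t', rfl⟩ : ∃ b' t', l' = b' :: t' := by
      cases l' with
      | nil => exact absurd rfl h'.1
      | cons b' t' => exact ⟨b', t', rfl⟩
    rcases value_cases h with ⟨ht, hv⟩ | ⟨ht, hv1, hv2⟩ <;>
      rcases value_cases h' with ⟨ht', hv'⟩ | ⟨ht', hv1', hv2'⟩
    · subst ht; subst ht'
      rw [hv, hv'] at heq
      have hbb : b = b' := by exact_mod_cast heq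
      rw [hbb]
    · exfalso
      rw [hv] at heq
      rw [← heq] at hv1' hv2'
      have d1 : b' - 1 < b := by exact_mod_cast hv1'
      have d2 : b < b' := by exact_mod_cast hv2'
      omega
    · exfalso
      rw [hv'] at heq
      rw [heq] at hv1 hv2
      have d1 : b - 1 < b' := by exact_mod_cast hv1
      have d2 : b' < b := by exact_mod_cast hv2
      omega
    · have hbb : b = b' := by
        rw [heq] at hv1 hv2
        have d1 : (b : ℚ) - 1 < (b' : ℚ) := by linarith
        have d2 : (b' : ℚ) - 1 < (b : ℚ) := by linarith
        have e1 : b - 1 < b' := by exact_mod_cast d1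
        have e2 : b' - 1 < b := by exact_mod_cast d2
        omega
      subst hbb
      obtain ⟨c, t1, rfl⟩ : ∃ c tt, t = c :: tt := by
        cases t with
        | nil => exact absurd rfl ht
        | cons c tt => exact ⟨c, tt, rfl⟩
      obtain ⟨c', t2, rfl⟩ : ∃ c' tt, t' = c' :: tt := by
        cases t' with
        | nil => exact absurd rfl ht'
        | cons c' tt => exact ⟨c', tt, rfl⟩
      have hst : IsString (c :: t1) := ⟨by simp, fun z hz => h.2 z (by simp at hz ⊢; tauto)⟩
      have hst' : IsString (c' :: t2) := ⟨by simp, fun z hz => h'.2 z (by simp at hz ⊢; tauto)⟩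
      have hvpos : (0:ℚ) < hjValue (c :: t1) := by linarith [one_lt_value hst]
      have hvpos' : (0:ℚ) < hjValue (c' :: t2) := by linarith [one_lt_value hst']
      have heq2 : hjValue (c :: t1) = hjValue (c' :: t2) := by
        rw [hjValue_cons b (c :: t1), hjValue_cons b (c' :: t2)] at heq
        have hinv : 1 / hjValue (c :: t1) = 1 / hjValue (c' :: t2) := by linarith
        field_simp at hinv
        linarith
      rw [ih hst hst' heq2]

end HJaux

namespace HJaux

lemma rep_val : ∀ k : ℕ, hjValue (List.replicate k 2 ++ [3]) =
    (2*(k:ℚ)+3)/(2*(k:ℚ)+1) := by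
  intro k
  induction k with
  | zero => simp [hjValue]
  | succ k ih =>
    rw [List.replicate_succ, List.cons_append, hjValue_cons, ih]
    have h1 : (0:ℚ) < 2*(k:ℚ)+1 := by positivity
    have h3 : (0:ℚ) < 2*(k:ℚ)+3 := by positivity
    rw [one_div, inv_div]
    push_cast
    field_simp
    ring

lemma base_val (d : ℕ) (hd : 1 ≤ d) :
    hjValue (baseTString d) = (((d:ℤ) * 2^2 : ℤ):ℚ) / (((d:ℤ)*2*1 - 1 : ℤ):ℚ) := by
  by_cases h1 : d = 1
  · subst h1; simp [baseTString, hjValue]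
  · have h2 : 2 ≤ d := by omega
    have hdq : (2:ℚ) ≤ (d:ℚ) := by exact_mod_cast h2
    rw [baseTString, if_neg h1, hjValue_cons, rep_val (d-2)]
    have hc : ((d - 2 : ℕ) : ℚ) = (d:ℚ) - 2 := by
      have h := Nat.cast_sub (R := ℚ) h2
      push_cast at h ⊢
      linarith
    rw [hc]
    have hd1 : (0:ℚ) < 2*((d:ℚ)-2)+1 := by linarith
    have hd3 : (0:ℚ) < 2*((d:ℚ)-2)+3 := by linarith
    rw [one_div, inv_div]
    push_cast
    have hz : (0:ℚ) < -1 + (d:ℚ)*2 := by linarith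
    field_simp [ne_of_gt hz]
    have key : (-1 + (d:ℚ)*2) * (-1 + (d:ℚ)*2)⁻¹ = 1 := mul_inv_cancel₀ (ne_of_gt hz)
    linear_combination (-4*(d:ℚ)) * key

lemma base_isString (d : ℕ) (hd : 1 ≤ d) : IsString (baseTString d) := by
  unfold baseTString
  split
  · exact ⟨by simp, by intro z hz; simp at hz; omega⟩
  · refine ⟨by simp, ?_⟩
    intro z hz
    simp [List.mem_append, List.mem_replicate] at hz
    omega

lemma key (d : ℕ) (hd : 1 ≤ d) (S : Set (List ℤ))
    (hstr : ∀ l ∈ S, IsString l) (hbase : baseTString d ∈ S)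
    (hop1 : ∀ (b : ℤ) (bs : List ℤ), b :: bs ∈ S → (b + 1) :: (bs ++ [2]) ∈ S)
    (hop2 : ∀ (bs : List ℤ) (b : ℤ), bs ++ [b] ∈ S → 2 :: (bs ++ [b + 1]) ∈ S) :
    ∀ N : ℕ, ∀ n a : ℤ, n ≤ (N:ℤ) → 2 ≤ n → 1 ≤ a → a < n → IsCoprime a n →
      ∃ l ∈ S, hjValue l = (((d:ℤ) * n ^ 2 : ℤ) : ℚ) / (((d:ℤ) * n * a - 1 : ℤ) : ℚ) := by
  have hD : (1:ℤ) ≤ (d:ℤ) := by exact_mod_cast hd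
  intro N
  induction N with
  | zero => intro n a h1 h2 _ _ _; push_cast at h1; omega
  | succ N ih =>
    intro n a hnN hn ha1 han hcop
    rcases lt_trichotomy (2*a) n with hlt | heq | hgt
    · have hco : IsCoprime a (n - a) := by
        have h := hcop.add_mul_left_right (-1)
        rwa [show n + a * (-1) = n - a by ring] at h
      obtain ⟨l₀, hl₀S, hl₀v⟩ := ih (n - a) a (by push_cast at hnN ⊢; omega)
        (by omega) ha1 (by omega) hco
      have hstr₀ := hstr l₀ hl₀S
      obtain ⟨b, bs, rfl⟩ : ∃ b bs, l₀ = b :: bs := by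
        cases l₀ with
        | nil => exact absurd rfl hstr₀.1
        | cons b bs => exact ⟨b, bs, rfl⟩
      refine ⟨(b+1) :: (bs ++ [2]), hop1 b bs hl₀S, ?_⟩
      have h := op1_val hD (by omega) ha1 (by omega) hco hstr₀ hl₀v
      rwa [show n - a + a = n by ring] at h
    · have ha : a = 1 := by
        have hdvd : a ∣ n := ⟨2, by omega⟩
        rcases Int.isUnit_iff.mp (hcop.isUnit_of_dvd hdvd) with h | h
        · exact h
        · omega
      have hn2 : n = 2 := by omega
      subst ha; subst hn2
      exact ⟨baseTString d, hbase, base_val d hd⟩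
    · have hco : IsCoprime (2*a - n) a := by
        have h := (hcop.symm.neg_left).add_mul_right_left 2
        rwa [show -n + 2 * a = 2*a - n by ring] at h
      obtain ⟨l₀, hl₀S, hl₀v⟩ := ih a (2*a - n) (by push_cast at hnN ⊢; omega)
        (by omega) (by omega) (by omega) hco
      have hstr₀ := hstr l₀ hl₀S
      obtain ⟨bs, c, rfl⟩ : ∃ bs c, l₀ = bs ++ [c] := by
        rcases List.eq_nil_or_concat l₀ with h | ⟨L, z, h⟩
        · exact absurd h hstr₀.1
        · exact ⟨L, z, by simpa using h⟩
      refine ⟨2 :: (bs ++ [c+1]), hop2 bs c hl₀S, ?_⟩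
      have h := op2_val hD (by omega : (2:ℤ) ≤ a) (by omega) (by omega) hco hstr₀ hl₀v
      rwa [show 2*a - (2*a - n) = n by ring] at h

end HJaux

/-- For fixed `d ≥ 1`, the set of `T_d`-strings is exactly the smallest set of
strings containing the base string (`[4]` if `d = 1`, `[3,2,…,2,3]` with
`d − 2` twos if `d ≥ 2`) and closed under the two operations
`[b₁,…,b_r] ↦ [b₁+1, b₂,…,b_r, 2]` and `[b₁,…,b_r] ↦ [2, b₁,…,b_r + 1]`. -/
theorem stmt_16 (d : ℕ) (hd : 1 ≤ d) :
    {l : List ℤ | IsTString d l} =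
      ⋂₀ {S : Set (List ℤ) |
        (∀ l ∈ S, IsString l) ∧
        baseTString d ∈ S ∧
        (∀ (b : ℤ) (bs : List ℤ), b :: bs ∈ S → (b + 1) :: (bs ++ [2]) ∈ S) ∧
        (∀ (bs : List ℤ) (b : ℤ), bs ++ [b] ∈ S → 2 :: (bs ++ [b + 1]) ∈ S)} := by
  have hD : (1:ℤ) ≤ (d:ℤ) := by exact_mod_cast hd
  ext l
  simp only [Set.mem_setOf_eq, Set.mem_sInter]
  constructor
  · rintro ⟨hl, n, a, hn, ha1, han, hcop, hval⟩ S hS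
    obtain ⟨hstr, hbase, hop1, hop2⟩ := hS
    obtain ⟨l₀, hl₀S, hl₀v⟩ := HJaux.key d hd S hstr hbase hop1 hop2 n.toNat n a
      (Int.self_le_toNat n) hn ha1 han hcop
    have hu := HJaux.string_unique hl (hstr l₀ hl₀S) (by rw [hval, hl₀v])
    rwa [hu]
  · intro h
    refine h {l | IsTString d l} ⟨fun l hl => hl.1, ?_, ?_, ?_⟩
    · exact ⟨HJaux.base_isString d hd, 2, 1, by norm_num, le_refl 1, by norm_num,
        isCoprime_one_left, HJaux.base_val d hd⟩
    · rintro b bs ⟨hstr, n, a, hn, ha1, han, hcop, hval⟩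
      refine ⟨?_, n + a, a, by omega, ha1, by omega, ?_,
        HJaux.op1_val hD hn ha1 han hcop hstr hval⟩
      · refine ⟨by simp, ?_⟩
        intro z hz
        simp at hz
        rcases hz with rfl | hz | rfl
        · have := hstr.2 b (by simp); omega
        · exact hstr.2 z (by simp [hz])
        · omega
      · have hc := hcop.add_mul_left_right 1
        rwa [mul_one] at hc
    · rintro bs c ⟨hstr, n, a, hn, ha1, han, hcop, hval⟩
      refine ⟨?_, 2*n - a, n, by omega, by omega, by omega, ?_,
        HJaux.op2_val hD hn ha1 han hcop hstr hval⟩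
      · refine ⟨by simp, ?_⟩
        intro z hz
        simp at hz
        rcases hz with rfl | hz | rfl
        · omega
        · exact hstr.2 z (by simp [hz])
        · have := hstr.2 c (by simp); omega
      · have h0 : IsCoprime n (-a) := hcop.symm.neg_right
        have hc := h0.add_mul_left_right 2
        rwa [show -a + n*2 = 2*n - a by ring] at hc
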